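/- Let u, v be rational numbers with (u + v)·(u·v − 1) ≠ 0, and set a = ((u − v)·(u·v + 1))/((u + v)·(u·v − 1)), p = u·v + 1, q = u − v, r = u·v − 1, s = u + v. Then (p + q)⁴ + a·(r − s)⁴ = (p − q)⁴ + a·(r + s)⁴. -/

import Mathlib

theorem stmt_7 (u v : ℚ) (h : (u + v) * (u * v - 1) ≠ 0)
    (a p q r s : ℚ)
    (ha : a = ((u - v) * (u * v + 1)) / ((u + v) * (u * v - 1)))
    (hp : p = u * v + 1) (hq : q = u - v) (hr : r = u * v - 1) (hs : s = u + v) :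
    (p + q) ^ 4 + a * (r - s) ^ 4 = (p - q) ^ 4 + a * (r + s) ^ 4 := by
  subst ha hp hq hr hs
  have h1 : u + v ≠ 0 := left_ne_zero_of_mul h
  have h2 : u * v - 1 ≠ 0 := right_ne_zero_of_mul h
  field_simp
  ring
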